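/- Let p, q be distinct primes, n ≥ 0, and suppose I ⊆ ℤ/(p·q^n)ℤ is an index set containing a·q^n for some 0 < a < p. Define J = {α·p·q^n + i : 0 ≤ α < q, i ∈ I} ⊆ ℤ/(p·q^{n+1})ℤ. Then J is an index set, J mod (p·q^n) = I, J + p·q^n = J, and J contains a nonzero multiple of q^{n+1}. -/

import Mathlib

theorem stmt_13 (p q n a : ℕ) (hp : p.Prime) (hq : q.Prime) (hpq : p ≠ q)
    (ha1 : 0 < a) (ha2 : a < p) (I : Set (ZMod (p * q ^ n))) (hI0 : 0 ∈ I)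
    (hIneg : ∀ x ∈ I, -x ∈ I)
    (haI : ((a * q ^ n : ℕ) : ZMod (p * q ^ n)) ∈ I) :
    let J : Set (ZMod (p * q ^ (n + 1))) :=
      {x | ∃ α < q, ∃ i ∈ I, x = ((α * (p * q ^ n) + i.val : ℕ) : ZMod (p * q ^ (n + 1)))}
    (0 ∈ J) ∧ (∀ x ∈ J, -x ∈ J) ∧
    (⇑(ZMod.castHom
        (show p * q ^ n ∣ p * q ^ (n + 1) from
          mul_dvd_mul_left p (pow_dvd_pow q (Nat.le_succ n)))
        (ZMod (p * q ^ n))) '' J = I) ∧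
    ((fun x => x + ((p * q ^ n : ℕ) : ZMod (p * q ^ (n + 1)))) '' J = J) ∧
    (∃ x ∈ J, x ≠ 0 ∧ ∃ b : ℕ, x = ((b * q ^ (n + 1) : ℕ) : ZMod (p * q ^ (n + 1)))) := by
  intro J
  have hNpos : 0 < p * q ^ n := Nat.mul_pos hp.pos (pow_pos hq.pos n)
  have hMeq : p * q ^ (n + 1) = q * (p * q ^ n) := by ring
  have hMpos : 0 < p * q ^ (n + 1) := Nat.mul_pos hp.pos (pow_pos hq.pos (n + 1))
  haveI : NeZero (p * q ^ n) := ⟨hNpos.ne'⟩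
  haveI : NeZero (p * q ^ (n + 1)) := ⟨hMpos.ne'⟩
  have hMzero : ((q * (p * q ^ n) : ℕ) : ZMod (p * q ^ (n + 1))) = 0 := by
    rw [← hMeq]; exact ZMod.natCast_self _
  -- key membership helper: no need for α < q
  have hmem : ∀ (α : ℕ) (i : ZMod (p * q ^ n)), i ∈ I →
      ((α * (p * q ^ n) + i.val : ℕ) : ZMod (p * q ^ (n + 1))) ∈ J := by
    intro α i hi
    refine ⟨α % q, Nat.mod_lt _ hq.pos, i, hi, ?_⟩
    have h1 : α * (p * q ^ n) + i.val
        = α / q * (q * (p * q ^ n)) + (α % q * (p * q ^ n) + i.val) := by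
      conv_lhs => rw [show α = q * (α / q) + α % q from (Nat.div_add_mod α q).symm]
      ring
    rw [h1, Nat.cast_add, Nat.cast_mul, hMzero, mul_zero, zero_add]
  have hval_lt : ∀ i : ZMod (p * q ^ n), i.val < p * q ^ n := fun i => ZMod.val_lt i
  refine ⟨?_, ?_, ?_, ?_, ?_⟩
  · -- 0 ∈ J
    refine ⟨0, hq.pos, 0, hI0, ?_⟩
    simp [ZMod.val_zero]
  · -- closed under negation
    rintro x ⟨α, hα, i, hi, rfl⟩
    by_cases hi0 : i = 0
    · subst hi0
      have hkey : (((q - α) * (p * q ^ n) + (-(0 : ZMod (p * q ^ n))).val : ℕ)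
              : ZMod (p * q ^ (n + 1)))
          + ((α * (p * q ^ n) + (0 : ZMod (p * q ^ n)).val : ℕ)
              : ZMod (p * q ^ (n + 1))) = 0 := by
        rw [← Nat.cast_add]
        have h2 : (q - α) * (p * q ^ n) + (-(0 : ZMod (p * q ^ n))).val
            + (α * (p * q ^ n) + (0 : ZMod (p * q ^ n)).val) = q * (p * q ^ n) := by
          simp only [neg_zero, ZMod.val_zero, Nat.add_zero]
          rw [← Nat.add_mul, Nat.sub_add_cancel hα.le]
        rw [h2, hMzero]
      rw [neg_eq_of_add_eq_zero_left hkey]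
      exact hmem (q - α) (-(0 : ZMod (p * q ^ n))) (hIneg 0 hI0)
    · have hnegval : (-i).val = p * q ^ n - i.val := by
        rw [ZMod.neg_val, if_neg hi0]
      have hkey : (((q - 1 - α) * (p * q ^ n) + (-i).val : ℕ) : ZMod (p * q ^ (n + 1)))
          + ((α * (p * q ^ n) + i.val : ℕ) : ZMod (p * q ^ (n + 1))) = 0 := by
        rw [← Nat.cast_add]
        have h2 : (q - 1 - α) * (p * q ^ n) + (-i).val + (α * (p * q ^ n) + i.val)
            = q * (p * q ^ n) := by
          rw [hnegval]
          have h3 : (q - 1 - α) * (p * q ^ n) + (p * q ^ n - i.val)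
                + (α * (p * q ^ n) + i.val)
              = ((q - 1 - α) + α) * (p * q ^ n) + ((p * q ^ n - i.val) + i.val) := by ring
          rw [h3, Nat.sub_add_cancel (hval_lt i).le,
            show q - 1 - α + α = q - 1 from by omega]
          have h4 : (q - 1) * (p * q ^ n) + p * q ^ n = (q - 1 + 1) * (p * q ^ n) := by ring
          rw [h4, show q - 1 + 1 = q from by omega]
        rw [h2, hMzero]
      rw [neg_eq_of_add_eq_zero_left hkey]
      exact hmem (q - 1 - α) (-i) (hIneg i hi)
  · -- image under cast = I
    have hcast : ∀ (α : ℕ) (i : ZMod (p * q ^ n)),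
        (ZMod.castHom (show p * q ^ n ∣ p * q ^ (n + 1) from
            mul_dvd_mul_left p (pow_dvd_pow q (Nat.le_succ n)))
          (ZMod (p * q ^ n)))
          ((α * (p * q ^ n) + i.val : ℕ) : ZMod (p * q ^ (n + 1))) = i := by
      intro α i
      rw [map_natCast, Nat.cast_add, Nat.cast_mul, ZMod.natCast_self, mul_zero, zero_add,
        ZMod.natCast_val, ZMod.cast_id]
    ext y
    constructor
    · rintro ⟨x, ⟨α, hα, i, hi, rfl⟩, rfl⟩
      rw [hcast]; exact hi
    · intro hy
      exact ⟨((0 * (p * q ^ n) + y.val : ℕ) : ZMod (p * q ^ (n + 1))), hmem 0 y hy, hcast 0 y⟩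
  · -- J + N = J
    ext x
    constructor
    · rintro ⟨y, ⟨α, hα, i, hi, rfl⟩, rfl⟩
      have h5 : ((α * (p * q ^ n) + i.val : ℕ) : ZMod (p * q ^ (n + 1)))
            + ((p * q ^ n : ℕ) : ZMod (p * q ^ (n + 1)))
          = (((α + 1) * (p * q ^ n) + i.val : ℕ) : ZMod (p * q ^ (n + 1))) := by
        push_cast
        ring
      simp only []
      rw [h5]
      exact hmem (α + 1) i hi
    · rintro ⟨α, hα, i, hi, rfl⟩
      refine ⟨(((α + q - 1) * (p * q ^ n) + i.val : ℕ) : ZMod (p * q ^ (n + 1))),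
        hmem _ i hi, ?_⟩
      show (((α + q - 1) * (p * q ^ n) + i.val : ℕ) : ZMod (p * q ^ (n + 1)))
          + ((p * q ^ n : ℕ) : ZMod (p * q ^ (n + 1))) = _
      rw [← Nat.cast_add]
      have h4 : (α + q - 1) * (p * q ^ n) + i.val + p * q ^ n
          = (α * (p * q ^ n) + i.val) + q * (p * q ^ n) := by
        have h5 : (α + q - 1) * (p * q ^ n) + i.val + p * q ^ n
            = ((α + q - 1) + 1) * (p * q ^ n) + i.val := by ring
        rw [h5, show α + q - 1 + 1 = α + q from by omega]
        ring
      rw [h4, Nat.cast_add, hMzero, add_zero]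
  · -- nonzero multiple of q^(n+1)
    haveI := Fact.mk hq
    haveI : NeZero q := ⟨hq.pos.ne'⟩
    have hpne : (p : ZMod q) ≠ 0 := by
      rw [Ne, ZMod.natCast_eq_zero_iff]
      intro hdvd
      exact hpq ((Nat.prime_dvd_prime_iff_eq hq hp).mp hdvd).symm
    set α0 : ℕ := ((-(a : ZMod q)) * (p : ZMod q)⁻¹).val with hα0def
    have hα0lt : α0 < q := ZMod.val_lt _
    have hdvd : q ∣ α0 * p + a := by
      rw [← ZMod.natCast_eq_zero_iff]
      push_cast
      rw [hα0def, ZMod.natCast_val, ZMod.cast_id]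
      field_simp
      ring
    obtain ⟨k, hk⟩ := hdvd
    have halt : a * q ^ n < p * q ^ n := by
      have := pow_pos hq.pos n
      exact Nat.mul_lt_mul_of_lt_of_le ha2 le_rfl this
    have hival : ((a * q ^ n : ℕ) : ZMod (p * q ^ n)).val = a * q ^ n :=
      ZMod.val_cast_of_lt halt
    refine ⟨((α0 * (p * q ^ n) + a * q ^ n : ℕ) : ZMod (p * q ^ (n + 1))), ?_, ?_, k, ?_⟩
    · have := hmem α0 ((a * q ^ n : ℕ) : ZMod (p * q ^ n)) haI
      rwa [hival] at this
    · rw [Ne, ZMod.natCast_eq_zero_iff]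
      intro hdvd2
      have hlt : α0 * (p * q ^ n) + a * q ^ n < p * q ^ (n + 1) := by
        rw [hMeq]
        calc α0 * (p * q ^ n) + a * q ^ n
            < α0 * (p * q ^ n) + p * q ^ n := by omega
          _ = (α0 + 1) * (p * q ^ n) := by ring
          _ ≤ q * (p * q ^ n) := Nat.mul_le_mul_right _ hα0lt
      have hpos : 0 < α0 * (p * q ^ n) + a * q ^ n :=
        Nat.lt_of_lt_of_le (Nat.mul_pos ha1 (pow_pos hq.pos n)) (Nat.le_add_left _ _)
      have := Nat.le_of_dvd hpos hdvd2
      omega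
    · congr 1
      have h6 : α0 * (p * q ^ n) + a * q ^ n = (α0 * p + a) * q ^ n := by ring
      rw [h6, hk]
      ring
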